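/- For 1 < α < 2 and n ≥ 3, the function f_n(α) = (1 - 2·3^{-α^n}) / (3^{α^{n-1}} - 2) is strictly decreasing in α on (1,2), and consequently f_n(α) < f_n(1) = 1/3. In particular, with ℓ_1 = (1/3)^{1/(α-1)}, ℓ_k = ℓ_1^{α^{k-1}}, h_k = ℓ_k(1 - 2·3^{-α^{k-1}}), one has h_{n+1}/h_n < 1/3 for n ≥ 3. -/

import Mathlib

private lemma aux_log3 : (1:ℝ) ≤ Real.log 3 := by
  rw [Real.le_log_iff_exp_le (by norm_num)]
  exact Real.exp_one_lt_d9.le.trans (by norm_num)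

private lemma aux_rpow_lb (t : ℝ) (ht : 0 ≤ t) : 1 + t ≤ (3:ℝ) ^ t := by
  rw [Real.rpow_def_of_pos (by norm_num)]
  calc 1 + t ≤ 1 + Real.log 3 * t := by nlinarith [aux_log3]
    _ ≤ _ := by rw [add_comm]; exact Real.add_one_le_exp _

private lemma aux_key (m : ℕ) (x : ℝ) (hx1 : 1 < x) :
    3 * x ≤ (3:ℝ) ^ (x ^ (m + 2)) := by
  have h2 : x ^ 2 ≤ x ^ (m + 2) := pow_le_pow_right₀ hx1.le (by omega)
  have h3 : (3:ℝ) ^ (x ^ 2) ≤ (3:ℝ) ^ (x ^ (m + 2)) :=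
    (Real.rpow_le_rpow_left_iff (by norm_num)).2 h2
  refine le_trans ?_ h3
  have hx2 : (0:ℝ) ≤ x ^ 2 - 1 := by nlinarith
  have hb : 1 + (x ^ 2 - 1) ≤ (3:ℝ) ^ (x ^ 2 - 1) := aux_rpow_lb _ hx2
  have hsplit : (3:ℝ) ^ ((1:ℝ)) * (3:ℝ) ^ (x ^ 2 - 1) = (3:ℝ) ^ (x ^ 2) := by
    rw [← Real.rpow_add (by norm_num)]
    ring_nf
  rw [Real.rpow_one] at hsplit
  rw [← hsplit]
  nlinarith

private lemma aux_anti (n : ℕ) (hn : 3 ≤ n) :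
    StrictAntiOn
      (fun α : ℝ => (1 - 2 * (3:ℝ) ^ (-(α ^ n))) / ((3:ℝ) ^ (α ^ (n - 1)) - 2))
      (Set.Ico 1 2) := by
  obtain ⟨m, rfl⟩ : ∃ m, n = m + 3 := ⟨n - 3, by omega⟩
  have hm1 : m + 3 - 1 = m + 2 := by omega
  simp only [hm1]
  have hc3 : Continuous (fun y : ℝ => (3:ℝ) ^ y) :=
    continuous_iff_continuousAt.2 fun y => Real.continuousAt_const_rpow (by norm_num)
  apply strictAntiOn_of_deriv_neg (convex_Ico 1 2)
  · apply ContinuousOn.div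
    · exact (continuous_const.sub (continuous_const.mul
        (hc3.comp (continuous_pow (m+3)).neg))).continuousOn
    · exact ((hc3.comp (continuous_pow (m+2))).sub continuous_const).continuousOn
    · intro x hx
      have h1 : (1:ℝ) ≤ x ^ (m + 2) := one_le_pow₀ hx.1
      have h2 : (3:ℝ) ^ (1:ℝ) ≤ (3:ℝ) ^ (x ^ (m + 2)) :=
        (Real.rpow_le_rpow_left_iff (by norm_num)).2 h1
      rw [Real.rpow_one] at h2
      exact ne_of_gt (by linarith)
  · intro x hx
    rw [interior_Ico] at hx
    obtain ⟨hx1, hx2⟩ := hx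
    have hxpos : (0:ℝ) < x := by linarith
    set u : ℝ := (3:ℝ) ^ (x ^ (m + 2)) with hu_def
    set v : ℝ := (3:ℝ) ^ (-(x ^ (m + 3))) with hv_def
    have hL : (0:ℝ) < Real.log 3 := by linarith [aux_log3]
    have hupos : (0:ℝ) < u := Real.rpow_pos_of_pos (by norm_num) _
    have hvpos : (0:ℝ) < v := Real.rpow_pos_of_pos (by norm_num) _
    have hukey : 3 * x ≤ u := aux_key m x hx1
    have hu2 : (0:ℝ) < u - 2 := by nlinarith
    have hvu : v * u < 1 := by
      rw [hv_def, hu_def, ← Real.rpow_add (by norm_num)]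
      apply Real.rpow_lt_one_of_one_lt_of_neg (by norm_num)
      have : x ^ (m + 2) < x ^ (m + 3) := pow_lt_pow_right₀ hx1 (by omega)
      linarith
    have hp1 : HasDerivAt (fun a : ℝ => a ^ (m + 3)) (((m:ℝ) + 3) * x ^ (m + 2)) x := by
      have := hasDerivAt_pow (m + 3) x
      simpa [hm1] using this
    have hp2 : HasDerivAt (fun a : ℝ => a ^ (m + 2)) (((m:ℝ) + 2) * x ^ (m + 1)) x := by
      have := hasDerivAt_pow (m + 2) x
      simpa [show m + 2 - 1 = m + 1 from rfl] using this
    have hexp1 : HasDerivAt (fun a : ℝ => (3:ℝ) ^ (-(a ^ (m + 3))))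
        (v * Real.log 3 * (-(((m:ℝ) + 3) * x ^ (m + 2)))) x := by
      have h0 := (hasDerivAt_const x (3:ℝ)).rpow hp1.neg (by norm_num)
      simp only [Pi.neg_apply] at h0
      rw [hv_def]
      convert h0 using 1
      ring
    have hexp2 : HasDerivAt (fun a : ℝ => (3:ℝ) ^ (a ^ (m + 2)))
        (u * Real.log 3 * (((m:ℝ) + 2) * x ^ (m + 1))) x := by
      have h0 := (hasDerivAt_const x (3:ℝ)).rpow hp2 (by norm_num)
      rw [hu_def]
      convert h0 using 1
      ring
    have hN : HasDerivAt (fun a : ℝ => 1 - 2 * (3:ℝ) ^ (-(a ^ (m + 3))))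
        (-(2 * (v * Real.log 3 * (-(((m:ℝ) + 3) * x ^ (m + 2)))))) x := by
      simpa using (hexp1.const_mul 2).const_sub 1
    have hD : HasDerivAt (fun a : ℝ => (3:ℝ) ^ (a ^ (m + 2)) - 2)
        (u * Real.log 3 * (((m:ℝ) + 2) * x ^ (m + 1))) x := hexp2.sub_const 2
    have hf : HasDerivAt
        (fun α : ℝ => (1 - 2 * (3:ℝ) ^ (-(α ^ (m + 3)))) / ((3:ℝ) ^ (α ^ (m + 2)) - 2))
        ((-(2 * (v * Real.log 3 * (-(((m:ℝ) + 3) * x ^ (m + 2))))) * (u - 2)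
          - (1 - 2 * v) * (u * Real.log 3 * (((m:ℝ) + 2) * x ^ (m + 1)))) / (u - 2) ^ 2) x := by
      have h0 := hN.div hD (show (3:ℝ) ^ (x ^ (m + 2)) - 2 ≠ 0 from ne_of_gt hu2)
      exact h0
    rw [hf.deriv]
    refine div_neg_of_neg_of_pos ?_ (by positivity)
    have hm0 : (0:ℝ) ≤ (m:ℝ) := Nat.cast_nonneg m
    have hxv : 3 * (x * v) < 1 := by nlinarith
    have step1 : 2 * ((m:ℝ) + 3) * x * v < (m:ℝ) + 2 := by nlinarith
    have step2 : 2 * ((m:ℝ) + 3) * x * v * (u - 2) < ((m:ℝ) + 2) * (u - 2) := by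
      nlinarith [mul_lt_mul_of_pos_right step1 hu2]
    have step3 : ((m:ℝ) + 2) * (u - 2) < ((m:ℝ) + 2) * ((1 - 2 * v) * u) := by
      have h : u - 2 < (1 - 2 * v) * u := by nlinarith
      exact mul_lt_mul_of_pos_left h (by positivity)
    have chain := step2.trans step3
    have hc : (0:ℝ) < x ^ (m + 1) * Real.log 3 := by positivity
    have final := mul_lt_mul_of_pos_left chain hc
    have hxx : x ^ (m + 2) = x ^ (m + 1) * x := by ring
    rw [hxx]
    nlinarith [final]

theorem stmt_10 (n : ℕ) (hn : 3 ≤ n) :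
    StrictAntiOn
      (fun α : ℝ => (1 - 2 * (3:ℝ) ^ (-(α ^ n))) / ((3:ℝ) ^ (α ^ (n - 1)) - 2))
      (Set.Ioo 1 2) ∧
    (∀ α ∈ Set.Ioo (1:ℝ) 2,
      (1 - 2 * (3:ℝ) ^ (-(α ^ n))) / ((3:ℝ) ^ (α ^ (n - 1)) - 2) < 1/3) ∧
    (∀ α ∈ Set.Ioo (1:ℝ) 2, ∀ ℓ h : ℕ → ℝ,
      (∀ k : ℕ, 1 ≤ k → ℓ k = ((1/3 : ℝ) ^ (1 / (α - 1))) ^ (α ^ (k - 1))) →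
      (∀ k : ℕ, 1 ≤ k → h k = ℓ k * (1 - 2 * (3:ℝ) ^ (-(α ^ (k - 1))))) →
      h (n + 1) / h n < 1/3) := by
  have hanti := aux_anti n hn
  have hlt : ∀ α ∈ Set.Ioo (1:ℝ) 2,
      (1 - 2 * (3:ℝ) ^ (-(α ^ n))) / ((3:ℝ) ^ (α ^ (n - 1)) - 2) < 1/3 := by
    intro α hα
    have h1 : (1:ℝ) ∈ Set.Ico (1:ℝ) 2 := by constructor <;> norm_num
    have h2 : α ∈ Set.Ico (1:ℝ) 2 := ⟨hα.1.le, hα.2⟩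
    have h3 := hanti h1 h2 hα.1
    norm_num [Real.rpow_neg_one, Real.rpow_one] at h3
    convert h3 using 2
  refine ⟨hanti.mono Set.Ioo_subset_Ico_self, hlt, ?_⟩
  intro α hα ℓ h hℓ hh
  obtain ⟨hα1, hα2⟩ := hα
  have hα1' : α - 1 ≠ 0 := by intro hc; nlinarith
  have hlta := hlt α ⟨hα1, hα2⟩
  obtain ⟨m, rfl⟩ : ∃ m, n = m + 3 := ⟨n - 3, by omega⟩
  simp only [show m + 3 - 1 = m + 2 from rfl] at hlta
  set u : ℝ := (3:ℝ) ^ (α ^ (m + 2)) with hu_def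
  set v : ℝ := (3:ℝ) ^ (-(α ^ (m + 3))) with hv_def
  set w : ℝ := (3:ℝ) ^ (-(α ^ (m + 2))) with hw_def
  have hwu : w * u = 1 := by
    rw [hw_def, hu_def, ← Real.rpow_add (by norm_num)]
    simp
  have hukey : 3 * α ≤ u := aux_key m α hα1
  have hu2 : (0:ℝ) < u - 2 := by nlinarith
  have hupos : (0:ℝ) < u := Real.rpow_pos_of_pos (by norm_num) _
  have hwpos : (0:ℝ) < w := Real.rpow_pos_of_pos (by norm_num) _
  have hw3 : (0:ℝ) < 1 - 2 * w := by nlinarith [hwu]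
  have hLpow : ∀ k : ℕ, 1 ≤ k → ℓ k = (3:ℝ) ^ (-(α ^ (k - 1) / (α - 1))) := by
    intro k hk
    rw [hℓ k hk, ← Real.rpow_mul (by norm_num : (0:ℝ) ≤ 1/3),
      show (1/3 : ℝ) = (3:ℝ)⁻¹ by norm_num, Real.inv_rpow (by norm_num),
      ← Real.rpow_neg (by norm_num)]
    congr 1
    ring
  have hℓn : ℓ (m + 3) = (3:ℝ) ^ (-(α ^ (m + 2) / (α - 1))) := by
    simpa using hLpow (m + 3) (by omega)
  have hℓn1 : ℓ (m + 3 + 1) = (3:ℝ) ^ (-(α ^ (m + 3) / (α - 1))) := by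
    simpa using hLpow (m + 4) (by omega)
  have hstep : ℓ (m + 3 + 1) = ℓ (m + 3) * w := by
    rw [hℓn1, hℓn, hw_def, ← Real.rpow_add (by norm_num)]
    congr 1
    field_simp
    ring
  have hℓpos : (0:ℝ) < ℓ (m + 3) := by
    rw [hℓn]; positivity
  rw [hh (m + 3 + 1) (by omega), hh (m + 3) (by omega), hstep]
  simp only [show m + 3 + 1 - 1 = m + 3 from rfl, show m + 3 - 1 = m + 2 from rfl]
  have hratio : ℓ (m + 3) * w * (1 - 2 * v) / (ℓ (m + 3) * (1 - 2 * w))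
      = (1 - 2 * v) / (u - 2) := by
    rw [div_eq_div_iff (by positivity) hu2.ne']
    linear_combination ℓ (m + 3) * (1 - 2 * v) * hwu
  rw [hratio]
  exact hlta
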